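/- Let T be a finite tree with at least 3 vertices, and φ an automorphism of T with φ(φ(*)) ≠ * possible; suppose T is the convex hull of the φ-orbit of a vertex * of orbit size N, and suppose T has more than 2 vertices. Then the distance in T between * and φ^{N−1}(*) is at least 2. -/

import Mathlib

/-- The orbit `{φ^i s : 0 ≤ i < N}` of a vertex under iterates of a map. -/
def vertexOrbit {V : Type*} (φ : V → V) (s : V) (N : ℕ) : Set V :=
  {v | ∃ i < N, φ^[i] s = v}

/-- The convex hull of a set `S` of vertices in a graph: the union of all
geodesics between pairs of points of `S`. -/
def treeHull {V : Type*} (G : SimpleGraph V) (S : Set V) : Set V :=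
  {v | ∃ a ∈ S, ∃ b ∈ S, G.dist a v + G.dist v b = G.dist a b}

/-- Walk along the orbit from `f^[k] s` down to `s`. -/
def chainWalk {V : Type*} (G : SimpleGraph V) (f : V → V) (s : V)
    (h : ∀ k, G.Adj (f^[k+1] s) (f^[k] s)) : (k : ℕ) → G.Walk (f^[k] s) s
  | 0 => SimpleGraph.Walk.nil
  | (k+1) => SimpleGraph.Walk.cons (h k) (chainWalk G f s h k)

lemma chainWalk_support {V : Type*} (G : SimpleGraph V) (f : V → V) (s : V)
    (h : ∀ k, G.Adj (f^[k+1] s) (f^[k] s)) (k : ℕ) :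
    (chainWalk G f s h k).support = ((List.range (k+1)).map (fun i => f^[i] s)).reverse := by
  induction k with
  | zero => simp [chainWalk]
  | succ k ih =>
    rw [chainWalk, SimpleGraph.Walk.support_cons, ih, List.range_succ (n := k + 1)]
    simp

lemma chainWalk_edges {V : Type*} (G : SimpleGraph V) (f : V → V) (s : V)
    (h : ∀ k, G.Adj (f^[k+1] s) (f^[k] s)) (k : ℕ) :
    ∀ e ∈ (chainWalk G f s h k).edges, ∃ i < k, e = s(f^[i+1] s, f^[i] s) := by
  induction k with
  | zero => simp [chainWalk]
  | succ k ih =>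
    intro e he
    rw [chainWalk, SimpleGraph.Walk.edges_cons] at he
    rcases List.mem_cons.mp he with h1 | h2
    · exact ⟨k, Nat.lt_succ_self k, h1⟩
    · obtain ⟨i, hi, hei⟩ := ih e h2
      exact ⟨i, hi.trans (Nat.lt_succ_self k), hei⟩

/-- If a finite tree `T` with more than 2 vertices is the convex hull of the
`φ`-orbit of a vertex `*` of orbit size `N`, then the distance between `*` and
`φ^{N−1}(*)` is at least 2. -/
theorem stmt13 {V : Type*} [Fintype V] (G : SimpleGraph V) (hT : G.IsTree)
    (φ : G ≃g G) (s : V) (N : ℕ) (hNpos : 0 < N)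
    (hfix : (fun v => φ v)^[N] s = s)
    (hmin : ∀ k, 0 < k → (fun v => φ v)^[k] s = s → N ≤ k)
    (hbig : 2 < Fintype.card V)
    (hhull : treeHull G (vertexOrbit (fun v => φ v) s N) = Set.univ) :
    2 ≤ G.dist s ((fun v => φ v)^[N - 1] s) := by
  set f : V → V := fun v => φ v with hf
  have hconn : G.Connected := hT.isConnected
  -- injectivity of f
  have hfinj : Function.Injective f := φ.toEquiv.injective
  -- distinctness of orbit points
  have hdist : ∀ i < N, ∀ j < N, f^[i] s = f^[j] s → i = j := by
    have key : ∀ i j, i < j → j < N → f^[i] s ≠ f^[j] s := by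
      intro i j hij hjN heq
      have : f^[i] s = f^[i] (f^[j - i] s) := by
        rw [← Function.iterate_add_apply]
        rw [show i + (j - i) = j from by omega]
        exact heq
      have h2 : f^[j - i] s = s := ((hfinj.iterate i) this).symm
      have := hmin (j - i) (by omega) h2
      omega
    intro i hi j hj heq
    rcases lt_trichotomy i j with h | h | h
    · exact absurd heq (key i j h hj)
    · exact h
    · exact absurd heq.symm (key j i h hi)
  by_contra hlt
  push_neg at hlt
  interval_cases h : G.dist s (f^[N - 1] s)
  · -- dist = 0 : so f^[N-1] s = s
    have heq : s = f^[N - 1] s :=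
      ((hconn.preconnected s _).dist_eq_zero_iff).mp h
    rcases Nat.eq_or_lt_of_le hNpos with hN1 | hN2
    · -- N = 1 : the orbit is {s}, so hull = {s}, contradicting card > 2
      obtain ⟨a, b, hab⟩ := Fintype.exists_pair_of_one_lt_card (by omega : 1 < Fintype.card V)
      have horb : vertexOrbit f s N = {s} := by
        ext v
        constructor
        · rintro ⟨i, hi, rfl⟩
          have : i = 0 := by omega
          simp [this]
        · rintro rfl; exact ⟨0, hNpos, rfl⟩
      have hmem : ∀ v : V, v = s := by
        intro v
        have : v ∈ treeHull G (vertexOrbit f s N) := hhull ▸ Set.mem_univ v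
        obtain ⟨a', ha', b', hb', hd⟩ := this
        rw [horb] at ha' hb'
        have ha'' : a' = s := ha'
        have hb'' : b' = s := hb'
        rw [ha'', hb'', SimpleGraph.dist_self] at hd
        have h0 : G.dist s v = 0 := by omega
        exact (((hconn.preconnected s v).dist_eq_zero_iff).mp h0).symm
      exact hab ((hmem a).trans (hmem b).symm)
    · -- N ≥ 2 : contradicts minimality
      have := hmin (N - 1) (by omega) heq.symm
      omega
  · -- dist = 1 : adjacency
    have hadj1 : G.Adj s (f^[N - 1] s) := SimpleGraph.dist_eq_one_iff_adj.mp h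
    -- apply φ : Adj (f s) (f^[N] s) = Adj (f s) s, i.e. Adj s (f s)
    have hadjS : G.Adj s (f s) := by
      have h2 : G.Adj (f s) (f (f^[N - 1] s)) := φ.map_adj_iff.mpr hadj1
      rw [← Function.iterate_succ_apply' f (N - 1) s,
        Nat.succ_eq_add_one, Nat.sub_add_cancel hNpos, hfix] at h2
      exact h2.symm
    -- consecutive orbit points adjacent
    have hadjk : ∀ k, G.Adj (f^[k+1] s) (f^[k] s) := by
      intro k
      induction k with
      | zero => simpa using hadjS.symm
      | succ k ih =>
        have h3 : G.Adj (f (f^[k+1] s)) (f (f^[k] s)) := φ.map_adj_iff.mpr ih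
        rw [← Function.iterate_succ_apply' f (k+1) s,
          ← Function.iterate_succ_apply' f k s] at h3
        exact h3
    rcases Nat.lt_or_ge N 3 with hN3 | hN3
    · -- N ≤ 2 : then every vertex is in {s, f s}, contradicting card > 2
      have hN2 : N = 1 ∨ N = 2 := by omega
      have horb : vertexOrbit f s N ⊆ {s, f s} := by
        rintro v ⟨i, hi, rfl⟩
        rcases hN2 with rfl | rfl
        · have : i = 0 := by omega
          simp [this]
        · interval_cases i <;> simp
      have hmem : ∀ v : V, v = s ∨ v = f s := by
        intro v
        have : v ∈ treeHull G (vertexOrbit f s N) := hhull ▸ Set.mem_univ v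
        obtain ⟨a', ha', b', hb', hd⟩ := this
        have ha2 : a' = s ∨ a' = f s := horb ha'
        have hb2 : b' = s ∨ b' = f s := horb hb'
        have hds : G.dist s (f s) = 1 := SimpleGraph.dist_eq_one_iff_adj.mpr hadjS
        have hdfs : G.dist (f s) s = 1 := by rw [SimpleGraph.dist_comm]; exact hds
        have hab1 : G.dist a' b' ≤ 1 := by
          rcases ha2 with rfl | rfl <;> rcases hb2 with rfl | rfl
          · rw [SimpleGraph.dist_self]; omega
          · rw [hds]
          · rw [hdfs]
          · rw [SimpleGraph.dist_self]; omega
        have : G.dist a' v = 0 ∨ G.dist v b' = 0 := by omega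
        rcases this with h0 | h0
        · have := ((hconn.preconnected a' v).dist_eq_zero_iff).mp h0
          rcases ha2 with rfl | rfl
          · exact Or.inl this.symm
          · exact Or.inr this.symm
        · have := ((hconn.preconnected v b').dist_eq_zero_iff).mp h0
          rcases hb2 with rfl | rfl
          · exact Or.inl this
          · exact Or.inr this
      -- card ≤ 2 contradiction
      have : Fintype.card V ≤ 2 := by
        have hsurj : Function.Surjective (fun x : Bool => if x then s else f s) := by
          intro v
          rcases hmem v with rfl | rfl
          · exact ⟨true, rfl⟩
          · exact ⟨false, rfl⟩
        calc Fintype.card V ≤ Fintype.card Bool := Fintype.card_le_of_surjective _ hsurj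
          _ = 2 := by simp
      omega
    · -- N ≥ 3 : build a cycle, contradicting acyclicity
      have hp : (chainWalk G f s hadjk (N - 1)).IsPath := by
        rw [SimpleGraph.Walk.isPath_def, chainWalk_support, List.nodup_reverse]
        refine List.Nodup.map_on ?_ List.nodup_range
        intro i hi j hj heq
        rw [List.mem_range] at hi hj
        exact hdist i (by omega) j (by omega) heq
      have hne : s(s, f^[N - 1] s) ∉ (chainWalk G f s hadjk (N - 1)).edges := by
        intro hmem
        obtain ⟨i, hi, hei⟩ := chainWalk_edges G f s hadjk (N - 1) _ hmem
        rw [Sym2.eq_iff] at hei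
        rcases hei with ⟨h1, h2⟩ | ⟨h1, h2⟩
        · have h1' : f^[0] s = f^[i + 1] s := by simpa using h1
          have := hdist 0 (by omega) (i + 1) (by omega) h1'
          omega
        · have h1' : f^[0] s = f^[i] s := by simpa using h1
          have h0 : i = 0 := (hdist 0 (by omega) i (by omega) h1').symm
          subst h0
          have h2' : f^[N - 1] s = f^[1] s := h2
          have := hdist (N - 1) (by omega) 1 (by omega) h2'
          omega
      have hcyc : (SimpleGraph.Walk.cons hadj1 (chainWalk G f s hadjk (N - 1))).IsCycle :=
        (SimpleGraph.Walk.cons_isCycle_iff _ _).mpr ⟨hp, hne⟩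
      exact hT.IsAcyclic _ hcyc
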